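/- Let q be an odd prime power with q ≡ 1 (mod 4). In the finite field F_q, the number of elements x such that x is a nonzero nonsquare and x+1 is a nonzero square equals (q-1)/4, and the number of x such that x is a nonzero nonsquare and x+1 is a nonzero nonsquare also equals (q-1)/4. -/

import Mathlib

open Finset

section Aux
variable {F : Type*} [Field F] [Fintype F] [DecidableEq F]

lemma key_sum (h2 : ringChar F ≠ 2) :
    ∑ x : F, quadraticChar F x * quadraticChar F (x + 1) = -1 := by
  have hpt : ∀ x : F, quadraticChar F x * quadraticChar F (x + 1) =
      quadraticChar F (1 + x⁻¹) - (if x = 0 then 1 else 0) := by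
    intro x
    by_cases hx : x = 0
    · simp [hx]
    · have hx1 : x + 1 = x * (1 + x⁻¹) := by field_simp
      rw [hx1, map_mul, ← mul_assoc, ← sq, quadraticChar_sq_one hx, one_mul, if_neg hx,
        sub_zero]
  rw [Finset.sum_congr rfl fun x _ => hpt x, Finset.sum_sub_distrib]
  have h1 : ∑ x : F, quadraticChar F (1 + x⁻¹) = ∑ x : F, quadraticChar F (1 + x) :=
    Fintype.sum_equiv (Equiv.inv F) _ _ (fun x => rfl)
  have h2' : ∑ x : F, quadraticChar F (1 + x) = 0 := by
    rw [← quadraticChar_sum_zero h2]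
    exact Fintype.sum_equiv (Equiv.addLeft 1) _ _ (fun x => rfl)
  rw [h1, h2']
  simp

lemma aux_count (h2 : ringChar F ≠ 2) (hneg : quadraticChar F (-1) = 1)
    (ε : ℤ) (hε : ε = 1 ∨ ε = -1) (Q : F → Prop) [DecidablePred Q]
    (hQ : ∀ y : F, y ≠ 0 → (Q y ↔ quadraticChar F y = ε)) :
    (4 : ℤ) * (univ.filter fun x : F =>
        (x ≠ 0 ∧ ¬IsSquare x) ∧ (x + 1 ≠ 0 ∧ Q (x + 1))).card =
      Fintype.card F - 1 := by
  set χ := quadraticChar F with hχdef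
  have hpt : ∀ x : F, (1 - χ x) * (1 + ε * χ (x + 1)) =
      (if x = 0 then 1 + ε else 0) +
      (if (x ≠ 0 ∧ ¬IsSquare x) ∧ (x + 1 ≠ 0 ∧ Q (x + 1)) then 4 else 0) := by
    intro x
    by_cases hx : x = 0
    · simp [hx, hχdef]
    by_cases hx1 : x + 1 = 0
    · have hxm : x = -1 := by linear_combination hx1
      simp [hx, hx1, hxm, hneg]
    · have hQx : Q (x + 1) ↔ χ (x + 1) = ε := hQ _ hx1
      have hs : IsSquare x ↔ χ x = 1 := (quadraticChar_one_iff_isSquare hx).symm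
      rcases quadraticChar_dichotomy (F := F) hx with h1 | h1 <;>
        rcases quadraticChar_dichotomy (F := F) hx1 with h2' | h2' <;>
        rcases hε with hε | hε <;>
        simp [hx, hx1, hQx, hs, h1, h2', hε, hχdef]
  have expand : ∑ x : F, (1 - χ x) * (1 + ε * χ (x + 1)) = Fintype.card F + ε := by
    have hr : ∀ x : F, (1 - χ x) * (1 + ε * χ (x + 1)) =
        1 + ε * χ (x + 1) - χ x - ε * (χ x * χ (x + 1)) := by intro x; ring
    rw [Finset.sum_congr rfl fun x _ => hr x]
    rw [Finset.sum_sub_distrib, Finset.sum_sub_distrib, Finset.sum_add_distrib,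
      ← Finset.mul_sum, ← Finset.mul_sum, quadraticChar_sum_zero h2, key_sum h2]
    have h1' : ∑ x : F, χ (x + 1) = 0 := by
      rw [← quadraticChar_sum_zero (F := F) h2]
      exact Fintype.sum_equiv (Equiv.addRight 1) _ _ (fun x => rfl)
    rw [h1']
    simp [Finset.card_univ]
  have count : ∑ x : F, (1 - χ x) * (1 + ε * χ (x + 1)) =
      (1 + ε) + 4 * (univ.filter fun x : F =>
        (x ≠ 0 ∧ ¬IsSquare x) ∧ (x + 1 ≠ 0 ∧ Q (x + 1))).card := by
    rw [Finset.sum_congr rfl fun x _ => hpt x, Finset.sum_add_distrib]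
    rw [Finset.sum_ite_eq' univ (0 : F) (fun _ => 1 + ε)]
    rw [Finset.sum_ite, Finset.sum_const, Finset.sum_const]
    simp [mul_comm]
  rw [expand] at count
  linarith
end Aux

theorem stmt_6 (q : ℕ) (F : Type*) [Field F] [Fintype F]
    (hq : Fintype.card F = q) (hodd : Odd q) (h4 : q % 4 = 1) :
    Nat.card {x : F // (x ≠ 0 ∧ ¬ IsSquare x) ∧ (x + 1 ≠ 0 ∧ IsSquare (x + 1))} =
      (q - 1) / 4 ∧
    Nat.card {x : F // (x ≠ 0 ∧ ¬ IsSquare x) ∧ (x + 1 ≠ 0 ∧ ¬ IsSquare (x + 1))} =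
      (q - 1) / 4 := by
  classical
  subst hq
  have h2 : ringChar F ≠ 2 := by
    intro h
    have := FiniteField.even_card_of_char_two h
    have := Nat.odd_iff.mp hodd
    omega
  have hneg : quadraticChar F (-1) = 1 := by
    rw [quadraticChar_neg_one h2]
    exact ZMod.χ₄_nat_one_mod_four h4
  have hq1 : 1 ≤ Fintype.card F := Fintype.card_pos
  constructor
  · have h := aux_count h2 hneg 1 (Or.inl rfl) IsSquare
      (fun y hy => (quadraticChar_one_iff_isSquare hy).symm)
    rw [Nat.card_eq_fintype_card, Fintype.card_subtype]
    omega
  · have h := aux_count h2 hneg (-1) (Or.inr rfl) (fun y => ¬ IsSquare y)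
      (fun y hy => (quadraticChar_neg_one_iff_not_isSquare).symm)
    rw [Nat.card_eq_fintype_card, Fintype.card_subtype]
    omega
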